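/- Let α ∈ (0,1) and σ ∈ (1,2). There exists a constant C > 0 depending only on d, α, σ such that for every continuously differentiable u : ℝ^d → ℝ, Σ_{k=0}^∞ 2^{k(σ−α)} sup_{x_0∈ℝ^d} [u − P_{x_0}u]_{α;B_{2^{−k}}(x_0)} ≤ C Σ_{k=0}^∞ 2^{k(σ−α)} sup_{x_0∈ℝ^d} inf_{p∈𝒫_1} [u − p]_{α;B_{2^{−k}}(x_0)}, the inequality being understood in [0,∞]. -/

import Mathlib

open MeasureTheory Metric Filter Set
open scoped ENNReal Topology

noncomputable section

/-- Hölder seminorm `[u]_{γ;Ω}` (valued in `ℝ≥0∞`). -/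
def holderSemi {E F : Type*} [NormedAddCommGroup E] [NormedAddCommGroup F]
    (γ : ℝ) (Ω : Set E) (u : E → F) : ℝ≥0∞ :=
  ⨆ (x : E) (_ : x ∈ Ω) (y : E) (_ : y ∈ Ω) (_ : x ≠ y),
    ENNReal.ofReal (‖u x - u y‖ / ‖x - y‖ ^ γ)

/-- Zygmund seminorm `[u]_{Λ^α(Ω)}` (valued in `ℝ≥0∞`). -/
def zygmundSemi {E : Type*} [NormedAddCommGroup E] (α : ℝ) (Ω : Set E) (u : E → ℝ) : ℝ≥0∞ :=
  ⨆ (x : E) (h : E) (_ : h ≠ 0) (_ : x ∈ Ω) (_ : x + h ∈ Ω) (_ : x - h ∈ Ω),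
    ENNReal.ofReal (|u (x + h) + u (x - h) - 2 * u x| / ‖h‖ ^ α)

/-- The `L_∞` norm of `u` on `Ω` (valued in `ℝ≥0∞`). -/
def eSupNorm {E : Type*} (Ω : Set E) (u : E → ℝ) : ℝ≥0∞ :=
  ⨆ (x : E) (_ : x ∈ Ω), ENNReal.ofReal |u x|

/-- A Dini function: nonnegative, nondecreasing on `(0,∞)`, with `∫_0^1 ω(r)/r dr < ∞`. -/
def IsDini (ω : ℝ → ℝ) : Prop :=
  (∀ r, 0 < r → 0 ≤ ω r) ∧ MonotoneOn ω (Set.Ioi (0:ℝ)) ∧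
    IntegrableOn (fun r => ω r / r) (Set.Ioc (0:ℝ) 1)

section helpers
variable {E : Type*} [NormedAddCommGroup E]

lemma holderSemi_le_of_forall {γ M : ℝ} (hM : 0 ≤ M) {Ω : Set E} {f : E → ℝ}
    (h : ∀ x ∈ Ω, ∀ y ∈ Ω, |f x - f y| ≤ M * ‖x - y‖ ^ γ) :
    holderSemi γ Ω f ≤ ENNReal.ofReal M := by
  simp only [holderSemi, iSup_le_iff]
  intro x hx y hy hxy
  apply ENNReal.ofReal_le_ofReal
  have h0 : (0:ℝ) < ‖x - y‖ := by rwa [norm_pos_iff, sub_ne_zero]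
  rw [div_le_iff₀ (by positivity : (0:ℝ) < ‖x - y‖ ^ γ)]
  calc ‖f x - f y‖ = |f x - f y| := by rw [Real.norm_eq_abs]
    _ ≤ M * ‖x - y‖ ^ γ := h x hx y hy

lemma forall_of_holderSemi_le {γ M : ℝ} (hγ : 0 < γ) (hM : 0 ≤ M) {Ω : Set E} {f : E → ℝ}
    (h : holderSemi γ Ω f ≤ ENNReal.ofReal M) :
    ∀ x ∈ Ω, ∀ y ∈ Ω, |f x - f y| ≤ M * ‖x - y‖ ^ γ := by
  intro x hx y hy
  rcases eq_or_ne x y with rfl | hxy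
  · simp only [sub_self, abs_zero, norm_zero, Real.zero_rpow hγ.ne', mul_zero, le_refl]
  · simp only [holderSemi, iSup_le_iff] at h
    have h2 := h x hx y hy hxy
    rw [ENNReal.ofReal_le_ofReal_iff hM] at h2
    have h0 : (0:ℝ) < ‖x - y‖ := by rwa [norm_pos_iff, sub_ne_zero]
    have hpos : (0:ℝ) < ‖x - y‖ ^ γ := by positivity
    rw [div_le_iff₀ hpos] at h2
    calc |f x - f y| = ‖f x - f y‖ := (Real.norm_eq_abs _).symm
      _ ≤ M * ‖x - y‖ ^ γ := h2

end helpers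

section inner_helpers
variable {F : Type*} [NormedAddCommGroup F] [InnerProductSpace ℝ F]

lemma norm_le_of_inner_bound {c : F} {M η t α : ℝ} (hM : 0 ≤ M) (hη : 0 ≤ η) (ht : 0 < t)
    (h : ∀ h' : F, ‖h'‖ ≤ t → |(inner ℝ c h' : ℝ)| ≤ M * ‖h'‖ ^ α + η * ‖h'‖) :
    ‖c‖ ≤ M * t ^ (α - 1) + η := by
  rcases eq_or_ne c 0 with rfl | hc
  · have h1 : (0:ℝ) ≤ M * t ^ (α-1) := by positivity
    simp only [norm_zero]
    linarith
  · have hcn : 0 < ‖c‖ := norm_pos_iff.mpr hc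
    set h' : F := (t / ‖c‖) • c with hh'
    have hnh : ‖h'‖ = t := by
      rw [hh', norm_smul, Real.norm_eq_abs, abs_of_pos (div_pos ht hcn),
        div_mul_cancel₀ _ hcn.ne']
    have hin : (inner ℝ c h' : ℝ) = t * ‖c‖ := by
      rw [hh', real_inner_smul_right, real_inner_self_eq_norm_sq]
      field_simp
    have h2 := h h' (le_of_eq hnh)
    rw [hin, hnh, abs_of_pos (by positivity)] at h2
    have hr : M * t ^ α / t = M * t ^ (α - 1) := by
      rw [Real.rpow_sub ht, Real.rpow_one]; ring
    calc ‖c‖ = t * ‖c‖ / t := by field_simp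
      _ ≤ (M * t ^ α + η * t) / t := by gcongr
      _ = M * t ^ (α - 1) + η := by rw [add_div, hr, mul_div_assoc, div_self ht.ne', mul_one]

variable [CompleteSpace F]

lemma littleO_gradient {u : F → ℝ} (hu : ContDiff ℝ 1 u) (x0 : F) {η : ℝ} (hη : 0 < η) :
    ∃ ρ : ℝ, 0 < ρ ∧ ∀ h : F, ‖h‖ ≤ ρ →
      |u (x0 + h) - u x0 - (inner ℝ (gradient u x0) h : ℝ)| ≤ η * ‖h‖ := by
  have hd : DifferentiableAt ℝ u x0 := (hu.differentiable one_ne_zero) x0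
  have hf : HasFDerivAt u (InnerProductSpace.toDual ℝ F (gradient u x0)) x0 :=
    hd.hasGradientAt.hasFDerivAt
  have hlo := hasFDerivAt_iff_isLittleO_nhds_zero.mp hf
  have hev := hlo.def hη
  rw [Metric.eventually_nhds_iff] at hev
  obtain ⟨ρ, hρ, hP⟩ := hev
  refine ⟨ρ/2, by positivity, fun h hh => ?_⟩
  have := hP (show dist h 0 < ρ by rw [dist_zero_right]; linarith)
  simpa [Real.norm_eq_abs, InnerProductSpace.toDual_apply_apply] using this

end inner_helpers

lemma rpow_two_mul_nat (c : ℝ) (m : ℕ) : (2:ℝ) ^ ((m:ℝ) * c) = ((2:ℝ) ^ c) ^ m := by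
  rw [← Real.rpow_natCast ((2:ℝ) ^ c) m, ← Real.rpow_mul (by norm_num), mul_comm]

lemma claimA {F : Type*} [NormedAddCommGroup F] [InnerProductSpace ℝ F] [CompleteSpace F]
    {α : ℝ} (hα : 0 < α) (hα1 : α < 1) {u : F → ℝ} (hu : ContDiff ℝ 1 u) (k : ℕ) :
    (⨆ x0 : F, holderSemi α (ball x0 ((2:ℝ) ^ (-(k:ℝ))))
        (fun x => u x - (u x0 + (inner ℝ (gradient u x0) (x - x0) : ℝ)))) ≤
      17 * ∑' m : ℕ, ENNReal.ofReal ((2:ℝ) ^ ((m:ℝ) * (1 - α))) *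
        ⨆ x0 : F, ⨅ (a0 : ℝ) (b : F),
          holderSemi α (ball x0 ((2:ℝ) ^ (-((k+m : ℕ):ℝ))))
            (fun x => u x - (a0 + (inner ℝ b x : ℝ))) := by
  have hmul : ∀ x y : ℝ, (2:ℝ)^x * (2:ℝ)^y = (2:ℝ)^(x+y) :=
    fun x y => (Real.rpow_add two_pos x y).symm
  have h2pos : ∀ x : ℝ, (0:ℝ) < (2:ℝ)^x := fun x => Real.rpow_pos_of_pos two_pos x
  set t : ℕ → ℝ≥0∞ := fun m =>
    ⨆ x0 : F, ⨅ (a0 : ℝ) (b : F),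
      holderSemi α (ball x0 ((2:ℝ) ^ (-((k+m : ℕ):ℝ)))) (fun x => u x - (a0 + (inner ℝ b x : ℝ)))
    with ht_def
  set v : ℕ → ℝ≥0∞ := fun m => ENNReal.ofReal ((2:ℝ) ^ ((m:ℝ) * (1 - α))) with hv_def
  by_cases hS : (∑' m : ℕ, v m * t m) = ⊤
  · rw [hS, ENNReal.mul_top (by norm_num)]; exact le_top
  have hvne : ∀ m, v m ≠ 0 := fun m => by
    simp only [hv_def, ne_eq, ENNReal.ofReal_eq_zero, not_le]; exact h2pos _
  have htne : ∀ m, t m ≠ ⊤ := by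
    intro m htop
    have hle : v m * t m ≤ ∑' m : ℕ, v m * t m := ENNReal.le_tsum m
    rw [htop, ENNReal.mul_top (hvne m)] at hle
    exact hS (top_le_iff.mp hle)
  set τ : ℕ → ℝ := fun m => (t m).toReal with hτ_def
  have hτ0 : ∀ m, 0 ≤ τ m := fun m => ENNReal.toReal_nonneg
  have htτ : ∀ m, t m = ENNReal.ofReal (τ m) := fun m => (ENNReal.ofReal_toReal (htne m)).symm
  set xs : ℕ → ℝ := fun m => (2:ℝ) ^ ((m:ℝ) * (1 - α)) * τ m with hxs_def
  have hxs0 : ∀ m, 0 ≤ xs m := fun m => mul_nonneg (h2pos _).le (hτ0 m)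
  have hvt : ∀ m, v m * t m = ENNReal.ofReal (xs m) := by
    intro m
    rw [htτ m, hv_def, ← ENNReal.ofReal_mul (h2pos _).le]
  have hxsum : Summable xs := by
    have h1 := ENNReal.summable_toReal hS
    refine h1.congr (fun m => ?_)
    rw [hvt m, ENNReal.toReal_ofReal (hxs0 m)]
  set Sr : ℝ := ∑' m, xs m with hSr_def
  have hSrS : ENNReal.ofReal Sr = ∑' m : ℕ, v m * t m := by
    rw [hSr_def, ENNReal.ofReal_tsum_of_nonneg hxs0 hxsum]
    exact tsum_congr (fun m => (hvt m).symm)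
  have hSr0 : 0 ≤ Sr := tsum_nonneg hxs0
  have hxleSr : ∀ m, xs m ≤ Sr := fun m => Summable.le_tsum hxsum m (fun j _ => hxs0 j)
  apply iSup_le; intro x0
  apply ENNReal.le_of_forall_pos_le_add
  intro ε hε _
  have hε' : (0:ℝ) < (ε:ℝ) := hε
  set δ : ℝ := (ε:ℝ)/33 with hδ_def
  have hδ : 0 < δ := by positivity
  set r : ℕ → ℝ := fun j => (2:ℝ) ^ (-(j:ℝ)) with hr_def
  have hrpos : ∀ j, 0 < r j := fun j => h2pos _
  have hrsucc : ∀ j, r (j+1) = r j / 2 := by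
    intro j
    show (2:ℝ) ^ (-(((j+1):ℕ):ℝ)) = (2:ℝ)^(-(j:ℝ)) / 2
    push_cast
    rw [show -((j:ℝ)+1) = -(j:ℝ) + (-1) by ring, Real.rpow_add two_pos, Real.rpow_neg_one]
    ring
  have hpowform : ∀ j:ℕ, (r j / 2) ^ (α-1) = (2:ℝ)^(((j:ℝ)+1)*(1-α)) := by
    intro j
    have h1 : r j / 2 = (2:ℝ)^(-(j:ℝ) + (-1)) := by
      rw [Real.rpow_add two_pos, Real.rpow_neg_one, hr_def]; ring
    rw [h1, ← Real.rpow_mul (by norm_num : (0:ℝ) ≤ 2)]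
    congr 1; ring
  set Mf : ℕ → ℝ := fun m => τ m + δ * (2:ℝ)^(-(m:ℝ)*(1-α)) * (2:ℝ)^(-(m:ℝ)) with hMf_def
  have hMfpos : ∀ m, 0 < Mf m := by
    intro m
    have h0 := hτ0 m
    have h1 : (0:ℝ) < δ * (2:ℝ)^(-(m:ℝ)*(1-α)) * (2:ℝ)^(-(m:ℝ)) := by positivity
    simp only [hMf_def]; linarith
  have hτltMf : ∀ m, τ m < Mf m := by
    intro m
    have h1 : (0:ℝ) < δ * (2:ℝ)^(-(m:ℝ)*(1-α)) * (2:ℝ)^(-(m:ℝ)) := by positivity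
    simp only [hMf_def]; linarith
  have hsel : ∀ m, ∃ q : ℝ × F, ∀ x ∈ ball x0 (r (k+m)), ∀ y ∈ ball x0 (r (k+m)),
      |(u x - (q.1 + (inner ℝ q.2 x : ℝ))) - (u y - (q.1 + (inner ℝ q.2 y : ℝ)))|
        ≤ Mf m * ‖x - y‖ ^ α := by
    intro m
    have hlt : (⨅ (a0 : ℝ) (b : F), holderSemi α (ball x0 (r (k+m)))
        (fun x => u x - (a0 + (inner ℝ b x : ℝ)))) < ENNReal.ofReal (Mf m) := by
      have h1 : (⨅ (a0 : ℝ) (b : F), holderSemi α (ball x0 (r (k+m)))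
          (fun x => u x - (a0 + (inner ℝ b x : ℝ)))) ≤ t m := by
        rw [ht_def]
        exact le_iSup (fun y0 => ⨅ (a0 : ℝ) (b : F),
          holderSemi α (ball y0 ((2:ℝ) ^ (-((k+m : ℕ):ℝ))))
            (fun x => u x - (a0 + (inner ℝ b x : ℝ)))) x0
      refine lt_of_le_of_lt h1 ?_
      rw [htτ m]
      exact (ENNReal.ofReal_lt_ofReal_iff (hMfpos m)).mpr (hτltMf m)
    simp only [iInf_lt_iff] at hlt
    obtain ⟨a0, b, hb⟩ := hlt
    exact ⟨(a0, b), forall_of_holderSemi_le hα (hMfpos m).le hb.le⟩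
  choose q hq using hsel
  have hpt : ∀ m, ∀ h : F, ‖h‖ ≤ r (k+m) / 2 →
      |u (x0 + h) - u x0 - (inner ℝ (q m).2 h : ℝ)| ≤ Mf m * ‖h‖ ^ α := by
    intro m h hh
    have hx : x0 + h ∈ ball x0 (r (k+m)) := by
      rw [mem_ball, dist_eq_norm, add_sub_cancel_left]
      have := hrpos (k+m); linarith
    have hy : x0 ∈ ball x0 (r (k+m)) := mem_ball_self (hrpos _)
    have h2 := hq m (x0+h) hx x0 hy
    rw [add_sub_cancel_left] at h2
    calc |u (x0 + h) - u x0 - (inner ℝ (q m).2 h : ℝ)|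
        = |(u (x0+h) - ((q m).1 + (inner ℝ (q m).2 (x0+h) : ℝ)))
            - (u x0 - ((q m).1 + (inner ℝ (q m).2 x0 : ℝ)))| := by
          congr 1
          rw [inner_add_right]
          ring
      _ ≤ Mf m * ‖h‖ ^ α := h2
  have hbd : ∀ m, ‖(q m).2 - (q (m+1)).2‖ ≤ (Mf m + Mf (m+1)) * (r (k+m+1) / 2) ^ (α - 1) := by
    intro m
    have h0 : (0:ℝ) ≤ Mf m + Mf (m+1) := by
      have := hMfpos m; have := hMfpos (m+1); linarith
    have hkey : ∀ h' : F, ‖h'‖ ≤ r (k+m+1)/2 →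
        |(inner ℝ ((q m).2 - (q (m+1)).2) h' : ℝ)| ≤ (Mf m + Mf (m+1)) * ‖h'‖ ^ α + 0 * ‖h'‖ := by
      intro h' hh'
      have hrr : r (k+m+1) = r (k+m) / 2 := hrsucc (k+m)
      have h1 : ‖h'‖ ≤ r (k+m) / 2 := by
        rw [hrr] at hh'; have := hrpos (k+m); linarith
      have hA := hpt m h' h1
      have hB := hpt (m+1) h' (by exact hh')
      have heq : (inner ℝ ((q m).2 - (q (m+1)).2) h' : ℝ)
          = (u (x0+h') - u x0 - (inner ℝ (q (m+1)).2 h' : ℝ))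
            - (u (x0+h') - u x0 - (inner ℝ (q m).2 h' : ℝ)) := by
        rw [inner_sub_left]; ring
      rw [heq, zero_mul, add_zero]
      calc |(u (x0+h') - u x0 - (inner ℝ (q (m+1)).2 h' : ℝ))
            - (u (x0+h') - u x0 - (inner ℝ (q m).2 h' : ℝ))|
          ≤ |u (x0+h') - u x0 - (inner ℝ (q (m+1)).2 h' : ℝ)|
            + |u (x0+h') - u x0 - (inner ℝ (q m).2 h' : ℝ)| := abs_sub _ _
        _ ≤ Mf (m+1) * ‖h'‖ ^ α + Mf m * ‖h'‖ ^ α := add_le_add hB hA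
        _ = (Mf m + Mf (m+1)) * ‖h'‖ ^ α := by ring
    have := norm_le_of_inner_bound h0 le_rfl (half_pos (hrpos (k+m+1))) hkey
    simpa using this
  have hzx : ∀ m:ℕ, (2:ℝ)^((m:ℝ)*(1-α)) * Mf m = xs m + δ * ((2:ℝ)^(-(1:ℝ)))^m := by
    intro m
    simp only [hMf_def, hxs_def, mul_add]
    congr 1
    rw [← rpow_two_mul_nat]
    rw [show (m:ℝ)*(-(1:ℝ)) = -(m:ℝ) by ring]
    rw [show (2:ℝ)^((m:ℝ)*(1-α)) * (δ * (2:ℝ)^(-(m:ℝ)*(1-α)) * (2:ℝ)^(-(m:ℝ)))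
      = δ * ((2:ℝ)^((m:ℝ)*(1-α)) * (2:ℝ)^(-(m:ℝ)*(1-α))) * (2:ℝ)^(-(m:ℝ)) by ring]
    rw [hmul, show (m:ℝ)*(1-α) + -(m:ℝ)*(1-α) = 0 by ring, Real.rpow_zero, mul_one]
  have hgeo : Summable (fun m:ℕ => ((2:ℝ)^(-(1:ℝ)))^m) := by
    apply summable_geometric_of_lt_one (h2pos _).le
    rw [Real.rpow_neg_one]; norm_num
  have hgeosum : ∑' m:ℕ, ((2:ℝ)^(-(1:ℝ)))^m = 2 := by
    rw [tsum_geometric_of_lt_one (h2pos _).le (by rw [Real.rpow_neg_one]; norm_num)]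
    rw [Real.rpow_neg_one]; norm_num
  set z : ℕ → ℝ := fun m => (2:ℝ)^((m:ℝ)*(1-α)) * Mf m with hz_def
  have hz0 : ∀ m, 0 ≤ z m := fun m => mul_nonneg (h2pos _).le (hMfpos m).le
  have hzsum : Summable z := by
    rw [hz_def, funext hzx]
    exact hxsum.add (hgeo.mul_left δ)
  have hztsum : ∑' m, z m = Sr + δ * 2 := by
    rw [hz_def, funext hzx, Summable.tsum_add hxsum (hgeo.mul_left δ), tsum_mul_left, hgeosum, hSr_def]
  set g : F := gradient u x0 with hg_def
  have hkeyexp : ∀ m:ℕ, (r (k+m)/2) ^ (α-1)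
      = (2:ℝ)^(((k:ℝ)+1)*(1-α)) * (2:ℝ)^((m:ℝ)*(1-α)) := by
    intro m
    rw [hpowform (k+m), hmul]
    congr 1
    push_cast
    ring
  have hφ : Tendsto (fun m => Mf m * (r (k+m)/2)^(α-1)) atTop (𝓝 0) := by
    have heq : (fun m => Mf m * (r (k+m)/2)^(α-1))
        = fun m => (2:ℝ)^(((k:ℝ)+1)*(1-α)) * z m := by
      funext m
      rw [hkeyexp m, hz_def]
      ring
    rw [heq]
    have h1 := hzsum.tendsto_atTop_zero.const_mul ((2:ℝ)^(((k:ℝ)+1)*(1-α)))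
    simpa using h1
  have hrt : Tendsto (fun m:ℕ => r (k+m)) atTop (𝓝 0) := by
    apply squeeze_zero (fun m => (hrpos (k+m)).le) (g := fun m:ℕ => ((2:ℝ)^(-(1:ℝ)))^m)
    · intro m
      rw [← rpow_two_mul_nat, hr_def]
      apply (Real.rpow_le_rpow_left_iff one_lt_two).mpr
      push_cast
      nlinarith [Nat.cast_nonneg (α := ℝ) k]
    · apply tendsto_pow_atTop_nhds_zero_of_lt_one (h2pos _).le
      rw [Real.rpow_neg_one]; norm_num
  have hbg : Tendsto (fun m => (q m).2) atTop (𝓝 g) := by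
    rw [Metric.tendsto_atTop]
    intro η hη
    obtain ⟨ρ, hρ, hρle⟩ := littleO_gradient hu x0 (show (0:ℝ) < η/3 by linarith)
    have h1 : ∀ᶠ m in atTop, Mf m * (r (k+m)/2)^(α-1) < η/3 :=
      hφ.eventually (gt_mem_nhds (by linarith))
    have h2 : ∀ᶠ m in atTop, r (k+m)/2 ≤ ρ := by
      filter_upwards [hrt.eventually (gt_mem_nhds hρ)] with m hm
      have := hrpos (k+m); linarith
    rw [eventually_atTop] at h1 h2
    obtain ⟨N1, hN1⟩ := h1
    obtain ⟨N2, hN2⟩ := h2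
    refine ⟨max N1 N2, fun m hm => ?_⟩
    have hφm := hN1 m (le_trans (le_max_left _ _) hm)
    have hρm := hN2 m (le_trans (le_max_right _ _) hm)
    have hb : ‖(q m).2 - g‖ ≤ Mf m * (r (k+m)/2)^(α-1) + η/3 := by
      have hkey : ∀ h' : F, ‖h'‖ ≤ r (k+m)/2 →
          |(inner ℝ ((q m).2 - g) h' : ℝ)| ≤ Mf m * ‖h'‖ ^ α + (η/3) * ‖h'‖ := by
        intro h' hh'
        have hA := hpt m h' hh'
        have hB := hρle h' (le_trans hh' hρm)
        have heq : (inner ℝ ((q m).2 - g) h' : ℝ)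
            = (u (x0+h') - u x0 - (inner ℝ g h' : ℝ))
              - (u (x0+h') - u x0 - (inner ℝ (q m).2 h' : ℝ)) := by
          rw [inner_sub_left]; ring
        rw [heq]
        calc |(u (x0+h') - u x0 - (inner ℝ g h' : ℝ))
              - (u (x0+h') - u x0 - (inner ℝ (q m).2 h' : ℝ))|
            ≤ |u (x0+h') - u x0 - (inner ℝ g h' : ℝ)|
              + |u (x0+h') - u x0 - (inner ℝ (q m).2 h' : ℝ)| := abs_sub _ _
          _ ≤ (η/3) * ‖h'‖ + Mf m * ‖h'‖ ^ α := add_le_add hB hA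
          _ = Mf m * ‖h'‖ ^ α + (η/3) * ‖h'‖ := by ring
      exact norm_le_of_inner_bound (hMfpos m).le (by linarith) (half_pos (hrpos (k+m))) hkey
    rw [dist_eq_norm]
    calc ‖(q m).2 - g‖ ≤ Mf m * (r (k+m)/2)^(α-1) + η/3 := hb
      _ < η/3 + η/3 := by linarith
      _ < η := by linarith
  have hz'sum : Summable (fun m => z (m+1)) := (summable_nat_add_iff 1).mpr hzsum
  have hz'tsum : ∑' m, z (m+1) ≤ Sr + δ * 2 := by
    have h1 := Summable.tsum_eq_zero_add hzsum
    have h2 := hz0 0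
    rw [← hztsum, h1]
    linarith
  set B : ℝ := (2:ℝ)^(((k:ℝ)+2)*(1-α)) * (2 * (Sr + δ * 2)) with hB_def
  have hkeyexp2 : ∀ m:ℕ, (r (k+m+1)/2) ^ (α-1)
      = (2:ℝ)^(((k:ℝ)+2)*(1-α)) * (2:ℝ)^((m:ℝ)*(1-α)) := by
    intro m
    rw [hpowform (k+m+1), hmul]
    congr 1
    push_cast
    ring
  have hz'le : ∀ m:ℕ, (2:ℝ)^((m:ℝ)*(1-α)) * Mf (m+1) ≤ z (m+1) := by
    intro m
    rw [hz_def]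
    apply mul_le_mul_of_nonneg_right _ (hMfpos (m+1)).le
    apply (Real.rpow_le_rpow_left_iff one_lt_two).mpr
    push_cast
    nlinarith [Nat.cast_nonneg (α := ℝ) m]
  have hpartial : ∀ n, ∑ m ∈ Finset.range n, ‖(q m).2 - (q (m+1)).2‖ ≤ B := by
    intro n
    have hstep : ∀ m, ‖(q m).2 - (q (m+1)).2‖
        ≤ (2:ℝ)^(((k:ℝ)+2)*(1-α)) * (z m + z (m+1)) := by
      intro m
      refine le_trans (hbd m) ?_
      rw [hkeyexp2 m]
      have h1 : (Mf m + Mf (m+1)) * ((2:ℝ)^(((k:ℝ)+2)*(1-α)) * (2:ℝ)^((m:ℝ)*(1-α)))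
          = (2:ℝ)^(((k:ℝ)+2)*(1-α))
            * ((2:ℝ)^((m:ℝ)*(1-α)) * Mf m + (2:ℝ)^((m:ℝ)*(1-α)) * Mf (m+1)) := by ring
      rw [h1]
      apply mul_le_mul_of_nonneg_left _ (h2pos _).le
      have h2 := hz'le m
      have h3 : (2:ℝ)^((m:ℝ)*(1-α)) * Mf m = z m := rfl
      linarith
    calc ∑ m ∈ Finset.range n, ‖(q m).2 - (q (m+1)).2‖
        ≤ ∑ m ∈ Finset.range n, (2:ℝ)^(((k:ℝ)+2)*(1-α)) * (z m + z (m+1)) :=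
          Finset.sum_le_sum (fun m _ => hstep m)
      _ = (2:ℝ)^(((k:ℝ)+2)*(1-α))
          * (∑ m ∈ Finset.range n, z m + ∑ m ∈ Finset.range n, z (m+1)) := by
          rw [← Finset.mul_sum, Finset.sum_add_distrib]
      _ ≤ (2:ℝ)^(((k:ℝ)+2)*(1-α)) * ((Sr + δ*2) + (Sr + δ*2)) := by
          apply mul_le_mul_of_nonneg_left _ (h2pos _).le
          have hs1 : ∑ m ∈ Finset.range n, z m ≤ Sr + δ*2 := by
            rw [← hztsum]; exact Summable.sum_le_tsum _ (fun m _ => hz0 m) hzsum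
          have hs2 : ∑ m ∈ Finset.range n, z (m+1) ≤ Sr + δ*2 :=
            le_trans (Summable.sum_le_tsum _ (fun m _ => hz0 (m+1)) hz'sum) hz'tsum
          linarith
      _ = B := by rw [hB_def]; ring
  have hb0g : ‖(q 0).2 - g‖ ≤ B := by
    have hlim : Tendsto (fun n => ‖(q 0).2 - (q n).2‖) atTop (𝓝 ‖(q 0).2 - g‖) :=
      (tendsto_const_nhds.sub hbg).norm
    refine le_of_tendsto hlim (Eventually.of_forall (fun n => ?_))
    have h1 : dist ((q 0).2) ((q n).2)
        ≤ ∑ m ∈ Finset.range n, dist ((q m).2) ((q (m+1)).2) :=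
      dist_le_range_sum_dist (fun m => (q m).2) n
    rw [dist_eq_norm] at h1
    refine le_trans (le_trans h1 (le_of_eq ?_)) (hpartial n)
    exact Finset.sum_congr rfl (fun m _ => dist_eq_norm _ _)
  set Mfin : ℝ := Mf 0 + ‖(q 0).2 - g‖ * (2 * r k)^(1-α) with hMfin_def
  have h2rk0 : (0:ℝ) < 2 * r k := by have := hrpos k; linarith
  have hMfin0 : 0 ≤ Mfin := by
    have h1 : (0:ℝ) ≤ ‖(q 0).2 - g‖ * (2 * r k)^(1-α) := by positivity
    have h2 := hMfpos 0
    rw [hMfin_def]; linarith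
  have hhs : holderSemi α (ball x0 (r k)) (fun x => u x - (u x0 + (inner ℝ g (x - x0) : ℝ)))
      ≤ ENNReal.ofReal Mfin := by
    apply holderSemi_le_of_forall hMfin0
    intro x hx y hy
    rcases eq_or_ne x y with rfl | hxy
    · simp only [sub_self, abs_zero, norm_zero, Real.zero_rpow hα.ne', mul_zero, le_refl]
    have hA := hq 0 x hx y hy
    have hxy2 : ‖x - y‖ < 2 * r k := by
      have h1 : dist x x0 < r k := mem_ball.mp hx
      have h2 : dist y x0 < r k := mem_ball.mp hy
      calc ‖x - y‖ = dist x y := (dist_eq_norm x y).symm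
        _ ≤ dist x x0 + dist x0 y := dist_triangle x x0 y
        _ = dist x x0 + dist y x0 := by rw [dist_comm x0 y]
        _ < 2 * r k := by linarith
    have hnorm_pos : (0:ℝ) < ‖x - y‖ := by rwa [norm_pos_iff, sub_ne_zero]
    have hsplit : ‖x - y‖ ≤ (2 * r k)^(1-α) * ‖x - y‖ ^ α := by
      calc ‖x - y‖ = ‖x - y‖^(1-α) * ‖x - y‖^α := by
            rw [← Real.rpow_add hnorm_pos]; norm_num
        _ ≤ (2 * r k)^(1-α) * ‖x - y‖ ^ α := by
            apply mul_le_mul_of_nonneg_right _ (Real.rpow_nonneg (norm_nonneg _) α)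
            exact Real.rpow_le_rpow (norm_nonneg _) hxy2.le (by linarith)
    have heq : (u x - (u x0 + (inner ℝ g (x - x0) : ℝ))) - (u y - (u x0 + (inner ℝ g (y - x0) : ℝ)))
        = ((u x - ((q 0).1 + (inner ℝ (q 0).2 x : ℝ)))
            - (u y - ((q 0).1 + (inner ℝ (q 0).2 y : ℝ))))
          + (inner ℝ ((q 0).2 - g) (x - y) : ℝ) := by
      simp only [inner_sub_left, inner_sub_right]
      ring
    rw [heq]
    calc |((u x - ((q 0).1 + (inner ℝ (q 0).2 x : ℝ)))
            - (u y - ((q 0).1 + (inner ℝ (q 0).2 y : ℝ))))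
          + (inner ℝ ((q 0).2 - g) (x - y) : ℝ)|
        ≤ |(u x - ((q 0).1 + (inner ℝ (q 0).2 x : ℝ)))
            - (u y - ((q 0).1 + (inner ℝ (q 0).2 y : ℝ)))|
          + |(inner ℝ ((q 0).2 - g) (x - y) : ℝ)| := abs_add_le _ _
      _ ≤ Mf 0 * ‖x - y‖ ^ α + ‖(q 0).2 - g‖ * ‖x - y‖ :=
          add_le_add hA (abs_real_inner_le_norm _ _)
      _ ≤ Mf 0 * ‖x - y‖ ^ α + ‖(q 0).2 - g‖ * ((2 * r k)^(1-α) * ‖x - y‖ ^ α) := by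
          have := mul_le_mul_of_nonneg_left hsplit (norm_nonneg ((q 0).2 - g))
          linarith
      _ = Mfin * ‖x - y‖ ^ α := by rw [hMfin_def]; ring
  have hMf0 : Mf 0 = τ 0 + δ := by
    simp only [hMf_def, Nat.cast_zero, neg_zero, zero_mul, Real.rpow_zero, mul_one]
  have hτ0Sr : τ 0 ≤ Sr := by
    have h1 := hxleSr 0
    simpa [hxs_def] using h1
  have h2rk : (2 * r k)^(1-α) = (2:ℝ)^((1-(k:ℝ))*(1-α)) := by
    have h1 : 2 * r k = (2:ℝ)^(1-(k:ℝ)) := by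
      rw [hr_def, show (1:ℝ)-(k:ℝ) = 1 + (-(k:ℝ)) by ring, Real.rpow_add two_pos, Real.rpow_one]
    rw [h1, ← Real.rpow_mul (by norm_num : (0:ℝ) ≤ 2)]
  have hBprod : B * (2 * r k)^(1-α) ≤ 16 * (Sr + δ * 2) := by
    rw [hB_def, h2rk]
    have h1 : (2:ℝ)^(((k:ℝ)+2)*(1-α)) * (2 * (Sr + δ*2)) * (2:ℝ)^((1-(k:ℝ))*(1-α))
        = ((2:ℝ)^(((k:ℝ)+2)*(1-α)) * (2:ℝ)^((1-(k:ℝ))*(1-α))) * (2 * (Sr + δ*2)) := by ring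
    rw [h1, hmul]
    have h2 : (2:ℝ)^(((k:ℝ)+2)*(1-α) + (1-(k:ℝ))*(1-α)) ≤ 8 := by
      rw [show ((k:ℝ)+2)*(1-α) + (1-(k:ℝ))*(1-α) = 3*(1-α) by ring]
      calc (2:ℝ)^(3*(1-α)) ≤ (2:ℝ)^(3:ℝ) := by
            apply (Real.rpow_le_rpow_left_iff one_lt_two).mpr; nlinarith
        _ = 8 := by
            rw [show (3:ℝ) = ((3:ℕ):ℝ) by norm_num, Real.rpow_natCast]; norm_num
    have h3 : (0:ℝ) ≤ 2 * (Sr + δ*2) := by linarith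
    nlinarith
  have hMfinle : Mfin ≤ 17 * Sr + (ε:ℝ) := by
    have h1 : ‖(q 0).2 - g‖ * (2 * r k)^(1-α) ≤ B * (2 * r k)^(1-α) := by
      apply mul_le_mul_of_nonneg_right hb0g (Real.rpow_nonneg h2rk0.le _)
    have h2 : (ε:ℝ) = 33 * δ := by rw [hδ_def]; ring
    rw [hMfin_def, hMf0]
    have h3 := hBprod
    have h4 := hτ0Sr
    rw [h2]
    linarith
  calc holderSemi α (ball x0 ((2:ℝ)^(-(k:ℝ))))
        (fun x => u x - (u x0 + (inner ℝ (gradient u x0) (x - x0) : ℝ)))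
      ≤ ENNReal.ofReal Mfin := hhs
    _ ≤ ENNReal.ofReal (17 * Sr + (ε:ℝ)) := ENNReal.ofReal_le_ofReal hMfinle
    _ ≤ ENNReal.ofReal (17 * Sr) + ENNReal.ofReal (ε:ℝ) := ENNReal.ofReal_add_le
    _ = 17 * ENNReal.ofReal Sr + (ε : ℝ≥0∞) := by
        rw [ENNReal.ofReal_mul (by norm_num : (0:ℝ) ≤ 17), ENNReal.ofReal_coe_nnreal]
        norm_num
    _ = 17 * (∑' m : ℕ, v m * t m) + (ε : ℝ≥0∞) := by rw [hSrS]
lemma step2 {α σ : ℝ} (hσ1 : 1 < σ) (H T : ℕ → ℝ≥0∞)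
    (hclaim : ∀ k, H k ≤ 17 * ∑' m : ℕ, ENNReal.ofReal ((2:ℝ)^((m:ℝ)*(1-α))) * T (k+m)) :
    ∑' k : ℕ, ENNReal.ofReal ((2:ℝ)^((k:ℝ)*(σ-α))) * H k
      ≤ ENNReal.ofReal (17 * ∑' m:ℕ, ((2:ℝ)^((1:ℝ)-σ))^m)
        * ∑' k : ℕ, ENNReal.ofReal ((2:ℝ)^((k:ℝ)*(σ-α))) * T k := by
  have h2pos : ∀ x : ℝ, (0:ℝ) < (2:ℝ)^x := fun x => Real.rpow_pos_of_pos two_pos x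
  have hmul : ∀ x y : ℝ, (2:ℝ)^x * (2:ℝ)^y = (2:ℝ)^(x+y) :=
    fun x y => (Real.rpow_add two_pos x y).symm
  set w : ℕ → ℝ≥0∞ := fun j => ENNReal.ofReal ((2:ℝ)^((j:ℝ)*(σ-α))) with hw_def
  have hgeo : Summable (fun m:ℕ => ((2:ℝ)^((1:ℝ)-σ))^m) :=
    summable_geometric_of_lt_one (h2pos _).le
      (Real.rpow_lt_one_of_one_lt_of_neg one_lt_two (by linarith))
  have hterm : ∀ k m : ℕ, w k * (ENNReal.ofReal ((2:ℝ)^((m:ℝ)*(1-α))) * T (k+m))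
      = ENNReal.ofReal (((2:ℝ)^((1:ℝ)-σ))^m) * (w (k+m) * T (k+m)) := by
    intro k m
    rw [← mul_assoc, ← mul_assoc]
    congr 1
    rw [hw_def]
    rw [← ENNReal.ofReal_mul (h2pos _).le,
      ← ENNReal.ofReal_mul (pow_nonneg (h2pos _).le m)]
    congr 1
    rw [hmul, ← rpow_two_mul_nat, hmul]
    congr 1
    push_cast
    ring
  calc ∑' k : ℕ, w k * H k
      ≤ ∑' k : ℕ, w k * (17 * ∑' m : ℕ, ENNReal.ofReal ((2:ℝ)^((m:ℝ)*(1-α))) * T (k+m)) :=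
        ENNReal.tsum_le_tsum (fun k => mul_le_mul_right (hclaim k) _)
    _ = ∑' k : ℕ, 17 * ∑' m : ℕ, w k * (ENNReal.ofReal ((2:ℝ)^((m:ℝ)*(1-α))) * T (k+m)) := by
        apply tsum_congr; intro k
        rw [ENNReal.tsum_mul_left (a := w k), mul_left_comm]
    _ = 17 * ∑' k : ℕ, ∑' m : ℕ, w k * (ENNReal.ofReal ((2:ℝ)^((m:ℝ)*(1-α))) * T (k+m)) :=
        ENNReal.tsum_mul_left
    _ = 17 * ∑' m : ℕ, ∑' k : ℕ, ENNReal.ofReal (((2:ℝ)^((1:ℝ)-σ))^m) * (w (k+m) * T (k+m)) := by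
        congr 1
        rw [ENNReal.tsum_comm]
        exact tsum_congr (fun m => tsum_congr (fun k => hterm k m))
    _ ≤ 17 * ∑' m : ℕ, ENNReal.ofReal (((2:ℝ)^((1:ℝ)-σ))^m) * ∑' j : ℕ, w j * T j := by
        apply mul_le_mul_right
        apply ENNReal.tsum_le_tsum
        intro m
        rw [ENNReal.tsum_mul_left (a := ENNReal.ofReal (((2:ℝ)^((1:ℝ)-σ))^m))]
        apply mul_le_mul_right
        exact ENNReal.tsum_comp_le_tsum_of_injective (add_left_injective m) (fun j => w j * T j)
    _ = 17 * ((∑' m : ℕ, ENNReal.ofReal (((2:ℝ)^((1:ℝ)-σ))^m)) * ∑' j : ℕ, w j * T j) := by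
        rw [ENNReal.tsum_mul_right]
    _ = ENNReal.ofReal (17 * ∑' m:ℕ, ((2:ℝ)^((1:ℝ)-σ))^m) * ∑' j : ℕ, w j * T j := by
        rw [ENNReal.ofReal_mul (by norm_num : (0:ℝ) ≤ 17),
          ENNReal.ofReal_tsum_of_nonneg (fun m => pow_nonneg (h2pos _).le m) hgeo,
          ← mul_assoc]
        norm_num


/-- Lemma 2.4, first part: the Taylor-polynomial approximation series is controlled by the
series of best affine approximations. -/
theorem taylor_series_le_affine_series
    (d : ℕ) (hd : 1 ≤ d) (α σ : ℝ) (hα : 0 < α) (hα1 : α < 1)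
    (hσ1 : 1 < σ) (hσ2 : σ < 2) :
    ∃ C : ℝ, 0 < C ∧
      ∀ u : EuclideanSpace ℝ (Fin d) → ℝ, ContDiff ℝ 1 u →
        (∑' k : ℕ, ENNReal.ofReal ((2:ℝ) ^ ((k:ℝ) * (σ - α))) *
            ⨆ x0 : EuclideanSpace ℝ (Fin d),
              holderSemi α (ball x0 ((2:ℝ) ^ (-(k:ℝ))))
                (fun x => u x - (u x0 + (inner ℝ (gradient u x0) (x - x0) : ℝ)))) ≤
          ENNReal.ofReal C *
            ∑' k : ℕ, ENNReal.ofReal ((2:ℝ) ^ ((k:ℝ) * (σ - α))) *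
              ⨆ x0 : EuclideanSpace ℝ (Fin d),
                ⨅ (a0 : ℝ) (b : EuclideanSpace ℝ (Fin d)),
                  holderSemi α (ball x0 ((2:ℝ) ^ (-(k:ℝ))))
                    (fun x => u x - (a0 + (inner ℝ b x : ℝ))) := by
  have h2pos : ∀ x : ℝ, (0:ℝ) < (2:ℝ)^x := fun x => Real.rpow_pos_of_pos two_pos x
  have hq0lt : (2:ℝ)^((1:ℝ)-σ) < 1 :=
    Real.rpow_lt_one_of_one_lt_of_neg one_lt_two (by linarith)
  have hSqpos : 0 < ∑' m:ℕ, ((2:ℝ)^((1:ℝ)-σ))^m := by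
    rw [tsum_geometric_of_lt_one (h2pos _).le hq0lt]
    have h1 : 0 < 1 - (2:ℝ)^((1:ℝ)-σ) := by linarith
    positivity
  refine ⟨17 * ∑' m:ℕ, ((2:ℝ)^((1:ℝ)-σ))^m, by positivity, ?_⟩
  intro u hu
  exact step2 hσ1 _ _ (fun k => claimA hα hα1 hu k)
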